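/- For all t, s ∈ ℝ one has ρ(γ₁(t), γ₂(s)) = arcosh(A(t,s)/(4 r e^{s+t})) = φ(t,s); in particular A(t,s) ≥ 4 r e^{s+t} for all t, s ∈ ℝ. -/

import Mathlib

open Real

noncomputable section

/-- Inverse hyperbolic cosine. -/
def arcosh (x : ℝ) : ℝ := Real.log (x + Real.sqrt (x ^ 2 - 1))

/-- Hyperbolic distance in the upper half-space model of `H³`. -/
def rho (p q : ℝ × ℝ × ℝ) : ℝ :=
  _root_.arcosh (1 +
    ((q.1 - p.1) ^ 2 + (q.2.1 - p.2.1) ^ 2 + (q.2.2 - p.2.2) ^ 2) / (2 * p.2.2 * q.2.2))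

/-- The vertical geodesic `γ₁(t) = (0,0,eᵗ)`. -/
def gamma1 (t : ℝ) : ℝ × ℝ × ℝ := (0, 0, Real.exp t)

/-- The half-circle geodesic `γ₂`. -/
def gamma2 (a r β s : ℝ) : ℝ × ℝ × ℝ :=
  (a + r * Real.cos β * (1 - Real.exp (2 * s)) / (1 + Real.exp (2 * s)),
   r * Real.sin β * (1 - Real.exp (2 * s)) / (1 + Real.exp (2 * s)),
   2 * r * Real.exp s / (1 + Real.exp (2 * s)))

/-- `d₁ = √(a² + r² − 2ar cos β)`. -/
def d1 (a r β : ℝ) : ℝ := Real.sqrt (a ^ 2 + r ^ 2 - 2 * a * r * Real.cos β)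

/-- `d₂ = √(a² + r² + 2ar cos β)`. -/
def d2 (a r β : ℝ) : ℝ := Real.sqrt (a ^ 2 + r ^ 2 + 2 * a * r * Real.cos β)

/-- `A(t,s) = e^{2s+2t} + e^{2t} + d₁² e^{2s} + d₂²`. -/
def Afun (a r β t s : ℝ) : ℝ :=
  Real.exp (2 * s + 2 * t) + Real.exp (2 * t) + d1 a r β ^ 2 * Real.exp (2 * s) +
    d2 a r β ^ 2

/-- `ρ(γ₁(t), γ₂(s)) = arcosh(A(t,s)/(4 r e^{s+t}))`, and `A(t,s) ≥ 4 r e^{s+t}`. -/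
theorem dist_gamma1_gamma2 (a r β : ℝ) (ha : 0 ≤ a) (hr : 0 < r)
    (hβ : β ∈ Set.Ioc 0 (π / 2)) :
    ∀ t s : ℝ,
      rho (gamma1 t) (gamma2 a r β s) =
        _root_.arcosh (Afun a r β t s / (4 * r * Real.exp (s + t))) ∧
      4 * r * Real.exp (s + t) ≤ Afun a r β t s := by
  intro t s
  have hcos : 0 ≤ Real.cos β :=
    Real.cos_nonneg_of_mem_Icc ⟨by linarith [hβ.1, Real.pi_pos], hβ.2⟩
  have hcos1 : Real.cos β ≤ 1 := Real.cos_le_one β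
  have hd1 : d1 a r β ^ 2 = a ^ 2 + r ^ 2 - 2 * a * r * Real.cos β := by
    rw [d1, Real.sq_sqrt]; nlinarith [sq_nonneg (a - r), mul_nonneg ha hr.le]
  have hd2 : d2 a r β ^ 2 = a ^ 2 + r ^ 2 + 2 * a * r * Real.cos β := by
    rw [d2, Real.sq_sqrt]; nlinarith [mul_nonneg (mul_nonneg ha hr.le) hcos]
  have hu : (0:ℝ) < Real.exp t := Real.exp_pos t
  have hv : (0:ℝ) < Real.exp s := Real.exp_pos s
  have hE : (0:ℝ) < 1 + Real.exp (2 * s) := by positivity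
  have hEs : Real.exp (2 * s) = Real.exp s ^ 2 := by
    rw [show (2:ℝ) * s = s + s by ring, Real.exp_add]; ring
  have hEt : Real.exp (2 * t) = Real.exp t ^ 2 := by
    rw [show (2:ℝ) * t = t + t by ring, Real.exp_add]; ring
  have hEst : Real.exp (2 * s + 2 * t) = Real.exp s ^ 2 * Real.exp t ^ 2 := by
    rw [Real.exp_add, hEs, hEt]
  have hEst' : Real.exp (s + t) = Real.exp s * Real.exp t := Real.exp_add s t
  have hsc : Real.sin β ^ 2 = 1 - Real.cos β ^ 2 := by
    have := Real.sin_sq_add_cos_sq β; linarith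
  have key : 1 +
      ((a + r * Real.cos β * (1 - Real.exp (2 * s)) / (1 + Real.exp (2 * s)) - 0) ^ 2 +
        (r * Real.sin β * (1 - Real.exp (2 * s)) / (1 + Real.exp (2 * s)) - 0) ^ 2 +
        (2 * r * Real.exp s / (1 + Real.exp (2 * s)) - Real.exp t) ^ 2) /
        (2 * Real.exp t * (2 * r * Real.exp s / (1 + Real.exp (2 * s)))) =
      Afun a r β t s / (4 * r * Real.exp (s + t)) := by
    rw [Afun, hd1, hd2, hEs, hEt, hEst, hEst']
    have h1 : (1 + Real.exp s ^ 2) ≠ 0 := by rw [← hEs]; positivity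
    field_simp
    linear_combination (4 * r ^ 2 * (1 - Real.exp s ^ 2) ^ 2) * hsc
  constructor
  · rw [rho, gamma1, gamma2]
    simp only []
    rw [key]
  · have hnum : 0 ≤
        ((a + r * Real.cos β * (1 - Real.exp (2 * s)) / (1 + Real.exp (2 * s)) - 0) ^ 2 +
          (r * Real.sin β * (1 - Real.exp (2 * s)) / (1 + Real.exp (2 * s)) - 0) ^ 2 +
          (2 * r * Real.exp s / (1 + Real.exp (2 * s)) - Real.exp t) ^ 2) := by positivity
    have hden : 0 < 2 * Real.exp t * (2 * r * Real.exp s / (1 + Real.exp (2 * s))) := by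
      positivity
    have h1 : (1:ℝ) ≤ Afun a r β t s / (4 * r * Real.exp (s + t)) := by
      rw [← key]
      have := div_nonneg hnum hden.le
      linarith
    have hpos : (0:ℝ) < 4 * r * Real.exp (s + t) := by positivity
    rw [le_div_iff₀ hpos] at h1
    linarith

end
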